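/- arXiv:1908.08743 — 2 statements merged into one kernel-verified Lean document; each statement's English description precedes it below -/
import Mathlib

section
/- In U_q(sl(2,ℂ)), for every n ∈ ℕ there exist Laurent polynomials c_0,…,c_{n-1} in K, K^{-1} (with coefficients in ℂ) such that E^nF^n = (EF)^n + Σ_{i=0}^{n-1} (EF)^i c_i(K, K^{-1}). -/
/-!
Common setup: the quantized universal enveloping algebra `U_q(sl(2,ℂ))`, defined as the
unital associative ℂ-algebra with generators `E, F, K, K⁻¹` and the relations
`K K⁻¹ = 1 = K⁻¹ K`, `K E K⁻¹ = q² E`, `K F K⁻¹ = q⁻² F`,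
`E F − F E = (K − K⁻¹)/(q − q⁻¹)`.
-/

noncomputable section

inductive QGen : Type
  | E | F | K | Kinv
  deriving DecidableEq

open FreeAlgebra in
inductive QRel (q : ℂ) : FreeAlgebra ℂ QGen → FreeAlgebra ℂ QGen → Prop
  | KKinv : QRel q (ι ℂ QGen.K * ι ℂ QGen.Kinv) 1
  | KinvK : QRel q (ι ℂ QGen.Kinv * ι ℂ QGen.K) 1
  | KE : QRel q (ι ℂ QGen.K * ι ℂ QGen.E) (q ^ 2 • (ι ℂ QGen.E * ι ℂ QGen.K))
  | KF : QRel q (ι ℂ QGen.K * ι ℂ QGen.F) ((q ^ 2)⁻¹ • (ι ℂ QGen.F * ι ℂ QGen.K))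
  | EF : QRel q (ι ℂ QGen.E * ι ℂ QGen.F - ι ℂ QGen.F * ι ℂ QGen.E)
      ((q - q⁻¹)⁻¹ • (ι ℂ QGen.K - ι ℂ QGen.Kinv))

/-- `U_q(sl(2,ℂ))`. -/
abbrev Uq (q : ℂ) : Type := RingQuot (QRel q)

/-- The generator `E`. -/
def Eg (q : ℂ) : Uq q := RingQuot.mkAlgHom ℂ (QRel q) (FreeAlgebra.ι ℂ QGen.E)

/-- The generator `F`. -/
def Fg (q : ℂ) : Uq q := RingQuot.mkAlgHom ℂ (QRel q) (FreeAlgebra.ι ℂ QGen.F)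

/-- The generator `K`. -/
def Kg (q : ℂ) : Uq q := RingQuot.mkAlgHom ℂ (QRel q) (FreeAlgebra.ι ℂ QGen.K)

/-- The generator `K⁻¹`. -/
def Kinvg (q : ℂ) : Uq q := RingQuot.mkAlgHom ℂ (QRel q) (FreeAlgebra.ι ℂ QGen.Kinv)

/-- `K^l` for an integer `l`. -/
def Kz (q : ℂ) (l : ℤ) : Uq q :=
  if 0 ≤ l then Kg q ^ l.toNat else Kinvg q ^ (-l).toNat

/-- `U_0`, the centralizer of `K` in `U_q(sl(2,ℂ))`. -/
def U0c (q : ℂ) : Subalgebra ℂ (Uq q) := Subalgebra.centralizer ℂ {Kg q}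

end

noncomputable section Proof13

open Polynomial AddMonoidAlgebra

namespace Stmt13Aux

variable (q : ℂ)

/-- Laurent polynomial coefficient ring. -/
abbrev A : Type := AddMonoidAlgebra ℂ ℤ

-- Basic relations in the quotient.
lemma rel_KKinv : Kg q * Kinvg q = 1 := by
  have h := RingQuot.mkAlgHom_rel ℂ (QRel.KKinv (q := q))
  simpa [Kg, Kinvg, map_mul, map_one] using h

lemma rel_KinvK : Kinvg q * Kg q = 1 := by
  have h := RingQuot.mkAlgHom_rel ℂ (QRel.KinvK (q := q))
  simpa [Kg, Kinvg, map_mul, map_one] using h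

lemma rel_KE : Kg q * Eg q = q ^ 2 • (Eg q * Kg q) := by
  have h := RingQuot.mkAlgHom_rel ℂ (QRel.KE (q := q))
  simpa [Kg, Eg, map_mul, map_smul] using h

lemma rel_KF : Kg q * Fg q = (q ^ 2)⁻¹ • (Fg q * Kg q) := by
  have h := RingQuot.mkAlgHom_rel ℂ (QRel.KF (q := q))
  simpa [Kg, Fg, map_mul, map_smul] using h

lemma rel_EF : Eg q * Fg q - Fg q * Eg q = (q - q⁻¹)⁻¹ • (Kg q - Kinvg q) := by
  have h := RingQuot.mkAlgHom_rel ℂ (QRel.EF (q := q))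
  simpa [Kg, Kinvg, Eg, Fg, map_mul, map_sub, map_smul] using h

/-- `K` as a unit. -/
def Ku : (Uq q)ˣ := ⟨Kg q, Kinvg q, rel_KKinv q, rel_KinvK q⟩

lemma Kz_eq (l : ℤ) : Kz q l = ((Ku q ^ l : (Uq q)ˣ) : Uq q) := by
  unfold Kz
  split_ifs with h
  · rw [← Int.toNat_of_nonneg h, zpow_natCast, Units.val_pow_eq_pow_val]
    rfl
  · push_neg at h
    rw [show Kinvg q ^ (-l).toNat = (((Ku q)⁻¹ ^ (-l).toNat : (Uq q)ˣ) : Uq q) by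
      rw [Units.val_pow_eq_pow_val]; rfl]
    congr 1
    rw [← zpow_natCast, inv_zpow, ← zpow_neg]
    congr 1
    omega

lemma Kz_add (a b : ℤ) : Kz q (a + b) = Kz q a * Kz q b := by
  rw [Kz_eq, Kz_eq, Kz_eq, zpow_add, Units.val_mul]

lemma Kz_zero : Kz q 0 = 1 := by simp [Kz]

lemma Kz_one : Kz q 1 = Kg q := by
  rw [Kz_eq, zpow_one]; rfl

lemma Kz_negone : Kz q (-1) = Kinvg q := by
  rw [Kz_eq, zpow_neg, zpow_one]; rfl

variable (hq : q ≠ 0)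
include hq

lemma hq2 : q ^ 2 ≠ 0 := pow_ne_zero _ hq

-- moving E and F past K, K⁻¹
lemma E_K : Eg q * Kg q = (q ^ 2)⁻¹ • (Kg q * Eg q) := by
  rw [rel_KE, smul_smul, inv_mul_cancel₀ (hq2 q hq), one_smul]

lemma E_Kinv : Eg q * Kinvg q = q ^ 2 • (Kinvg q * Eg q) := by
  calc Eg q * Kinvg q = Kinvg q * Kg q * Eg q * Kinvg q := by
        rw [rel_KinvK, one_mul]
    _ = Kinvg q * (Kg q * Eg q) * Kinvg q := by noncomm_ring
    _ = q ^ 2 • (Kinvg q * Eg q * (Kg q * Kinvg q)) := by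
        rw [rel_KE]; rw [mul_smul_comm, smul_mul_assoc]; congr 1; noncomm_ring
    _ = q ^ 2 • (Kinvg q * Eg q) := by rw [rel_KKinv, mul_one]

lemma Kinv_F : Kinvg q * Fg q = q ^ 2 • (Fg q * Kinvg q) := by
  have h1 : Fg q * Kinvg q = (q ^ 2)⁻¹ • (Kinvg q * Fg q) := by
    calc Fg q * Kinvg q = Kinvg q * Kg q * Fg q * Kinvg q := by
          rw [rel_KinvK, one_mul]
      _ = Kinvg q * (Kg q * Fg q) * Kinvg q := by noncomm_ring
      _ = (q ^ 2)⁻¹ • (Kinvg q * Fg q * (Kg q * Kinvg q)) := by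
          rw [rel_KF]; rw [mul_smul_comm, smul_mul_assoc]; congr 1; noncomm_ring
      _ = (q ^ 2)⁻¹ • (Kinvg q * Fg q) := by rw [rel_KKinv, mul_one]
  rw [h1, smul_smul, mul_inv_cancel₀ (hq2 q hq), one_smul]

lemma Kpow_F (m : ℕ) : Kg q ^ m * Fg q = ((q ^ 2) ^ m)⁻¹ • (Fg q * Kg q ^ m) := by
  induction m with
  | zero => simp
  | succ m ih =>
      calc Kg q ^ (m + 1) * Fg q = Kg q ^ m * (Kg q * Fg q) := by
            rw [pow_succ, mul_assoc]
        _ = (q ^ 2)⁻¹ • (Kg q ^ m * Fg q * Kg q) := by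
            rw [rel_KF, mul_smul_comm, mul_assoc]
        _ = ((q ^ 2)⁻¹ * ((q ^ 2) ^ m)⁻¹) • (Fg q * Kg q ^ m * Kg q) := by
            rw [ih, smul_mul_assoc, smul_smul]
        _ = ((q ^ 2) ^ (m + 1))⁻¹ • (Fg q * Kg q ^ (m + 1)) := by
            rw [pow_succ (q ^ 2) m, mul_inv, mul_comm ((q ^ 2) ^ m)⁻¹,
              pow_succ (Kg q) m, mul_assoc]

lemma Kinvpow_F (m : ℕ) : Kinvg q ^ m * Fg q = (q ^ 2) ^ m • (Fg q * Kinvg q ^ m) := by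
  induction m with
  | zero => simp
  | succ m ih =>
      calc Kinvg q ^ (m + 1) * Fg q = Kinvg q ^ m * (Kinvg q * Fg q) := by
            rw [pow_succ, mul_assoc]
        _ = q ^ 2 • (Kinvg q ^ m * Fg q * Kinvg q) := by
            rw [Kinv_F q hq, mul_smul_comm, mul_assoc]
        _ = (q ^ 2 * (q ^ 2) ^ m) • (Fg q * Kinvg q ^ m * Kinvg q) := by
            rw [ih, smul_mul_assoc, smul_smul]
        _ = (q ^ 2) ^ (m + 1) • (Fg q * Kinvg q ^ (m + 1)) := by
            rw [pow_succ (q ^ 2) m, mul_comm ((q ^ 2) ^ m),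
              pow_succ (Kinvg q) m, mul_assoc]

lemma Kz_F (l : ℤ) : Kz q l * Fg q = ((q ^ 2) ^ l)⁻¹ • (Fg q * Kz q l) := by
  unfold Kz
  split_ifs with h
  · rw [Kpow_F q hq, ← zpow_natCast (q ^ 2), Int.toNat_of_nonneg h]
  · push_neg at h
    rw [Kinvpow_F q hq, ← zpow_natCast (q ^ 2)]
    congr 1
    rw [← zpow_neg]
    congr 1
    omega

lemma comm_X_K : Commute (Eg q * Fg q) (Kg q) := by
  have : Kg q * (Eg q * Fg q) = Eg q * Fg q * Kg q := by
    calc Kg q * (Eg q * Fg q) = (Kg q * Eg q) * Fg q := by rw [mul_assoc]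
      _ = q ^ 2 • (Eg q * (Kg q * Fg q)) := by rw [rel_KE, smul_mul_assoc, mul_assoc]
      _ = q ^ 2 • ((q ^ 2)⁻¹ • (Eg q * (Fg q * Kg q))) := by rw [rel_KF, mul_smul_comm]
      _ = Eg q * Fg q * Kg q := by
          rw [smul_smul, mul_inv_cancel₀ (hq2 q hq), one_smul, mul_assoc]
  exact this.symm

lemma comm_X_Kinv : Commute (Eg q * Fg q) (Kinvg q) := by
  have : Kinvg q * (Eg q * Fg q) = Eg q * Fg q * Kinvg q := by
    have hE : Kinvg q * Eg q = (q ^ 2)⁻¹ • (Eg q * Kinvg q) := by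
      rw [E_Kinv q hq, smul_smul, inv_mul_cancel₀ (hq2 q hq), one_smul]
    calc Kinvg q * (Eg q * Fg q) = (Kinvg q * Eg q) * Fg q := by rw [mul_assoc]
      _ = (q ^ 2)⁻¹ • (Eg q * (Kinvg q * Fg q)) := by rw [hE, smul_mul_assoc, mul_assoc]
      _ = (q ^ 2)⁻¹ • (q ^ 2 • (Eg q * (Fg q * Kinvg q))) := by
          rw [Kinv_F q hq, mul_smul_comm]
      _ = Eg q * Fg q * Kinvg q := by
          rw [smul_smul, inv_mul_cancel₀ (hq2 q hq), one_smul, mul_assoc]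
  exact this.symm

lemma comm_X_Kz (l : ℤ) : Commute (Eg q * Fg q) (Kz q l) := by
  unfold Kz
  split_ifs with h
  · exact (comm_X_K q hq).pow_right _
  · exact (comm_X_Kinv q hq).pow_right _

/-- Evaluation of Laurent polynomials at `K`. -/
def L : A →ₐ[ℂ] Uq q :=
  AddMonoidAlgebra.lift ℂ (Uq q) ℤ ((Units.coeHom (Uq q)).comp (zpowersHom (Uq q)ˣ (Ku q)))

lemma L_single (l : ℤ) (a : ℂ) : L q (AddMonoidAlgebra.single l a) = a • Kz q l := by
  unfold L
  rw [AddMonoidAlgebra.lift_single]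
  congr 1
  rw [Kz_eq]
  rfl

lemma L_apply (a : A) : L q a = a.coeff.sum fun l c => c • Kz q l := by
  conv_lhs => rw [← AddMonoidAlgebra.sum_coeff_single a]
  rw [map_finsuppSum]
  exact Finsupp.sum_congr fun l _ => L_single q hq l _

lemma comm_X_L (a : A) : Commute (Eg q * Fg q) (L q a) := by
  rw [L_apply q hq, Finsupp.sum]
  refine Commute.sum_right _ _ _ fun l _ => ?_
  exact (comm_X_Kz q hq l).smul_right _

/-- The unit `q⁻² K` of the Laurent polynomial ring. -/
def w : Aˣ :=
  ⟨AddMonoidAlgebra.single 1 (q ^ 2)⁻¹, AddMonoidAlgebra.single (-1) (q ^ 2),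
    by rw [AddMonoidAlgebra.single_mul_single, inv_mul_cancel₀ (hq2 q hq)]
       norm_num [AddMonoidAlgebra.one_def],
    by rw [AddMonoidAlgebra.single_mul_single, mul_inv_cancel₀ (hq2 q hq)]
       norm_num [AddMonoidAlgebra.one_def]⟩

lemma w_zpow (l : ℤ) : ((w q hq ^ l : Aˣ) : A) = AddMonoidAlgebra.single l ((q ^ 2) ^ l)⁻¹ := by
  rcases l with n | n
  · rw [Int.ofNat_eq_coe, zpow_natCast, Units.val_pow_eq_pow_val,
      show ((w q hq : Aˣ) : A) = AddMonoidAlgebra.single (1 : ℤ) (q ^ 2)⁻¹ from rfl,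
      AddMonoidAlgebra.single_pow, zpow_natCast, inv_pow]
    congr 1
    simp
  · rw [zpow_negSucc, ← inv_pow, Units.val_pow_eq_pow_val,
      show (((w q hq)⁻¹ : Aˣ) : A) = AddMonoidAlgebra.single (-1 : ℤ) (q ^ 2) from rfl,
      AddMonoidAlgebra.single_pow,
      show ((q ^ 2) ^ Int.negSucc n)⁻¹ = (q ^ 2) ^ (n + 1) by rw [zpow_negSucc, inv_inv]]
    congr 1
    simp [Int.negSucc_eq]

/-- Shift endomorphism of Laurent polynomials induced by conjugating across `F`. -/
def σ : A →ₐ[ℂ] A :=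
  AddMonoidAlgebra.lift ℂ A ℤ ((Units.coeHom A).comp (zpowersHom Aˣ (w q hq)))

lemma σ_single (l : ℤ) (a : ℂ) :
    σ q hq (AddMonoidAlgebra.single l a) = AddMonoidAlgebra.single l (a * ((q ^ 2) ^ l)⁻¹) := by
  unfold σ
  rw [AddMonoidAlgebra.lift_single]
  rw [show ((Units.coeHom A).comp (zpowersHom Aˣ (w q hq))) (Multiplicative.ofAdd l)
      = ((w q hq ^ l : Aˣ) : A) from rfl]
  rw [w_zpow q hq, AddMonoidAlgebra.smul_single']

lemma L_mul_F (a : A) : L q a * Fg q = Fg q * L q (σ q hq a) := by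
  induction a using AddMonoidAlgebra.induction_linear with
  | zero => simp
  | add f g hf hg => rw [map_add, map_add, map_add, add_mul, mul_add, hf, hg]
  | single l a =>
      rw [L_single q hq, σ_single q hq, L_single q hq, smul_mul_assoc,
        Kz_F q hq, smul_smul, mul_smul_comm]

/-- The Laurent polynomial `g` with `E (EF) = ((EF) + g(K)) E`. -/
def g : A :=
  AddMonoidAlgebra.single 1 ((q - q⁻¹)⁻¹ * (q ^ 2)⁻¹) -
    AddMonoidAlgebra.single (-1) ((q - q⁻¹)⁻¹ * q ^ 2)

lemma L_g : L q (g q) =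
    ((q - q⁻¹)⁻¹ * (q ^ 2)⁻¹) • Kg q - ((q - q⁻¹)⁻¹ * q ^ 2) • Kinvg q := by
  rw [g, map_sub, L_single q hq, L_single q hq, Kz_one, Kz_negone]

lemma E_X : Eg q * (Eg q * Fg q) = (Eg q * Fg q + L q (g q)) * Eg q := by
  have hEF : Eg q * Fg q = Fg q * Eg q + (q - q⁻¹)⁻¹ • (Kg q - Kinvg q) := by
    rw [← rel_EF q]; abel
  rw [add_mul, L_g q hq]
  calc Eg q * (Eg q * Fg q)
      = Eg q * (Fg q * Eg q) + (q - q⁻¹)⁻¹ • (Eg q * Kg q - Eg q * Kinvg q) := by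
        rw [hEF]; rw [mul_add, mul_smul_comm, mul_sub]
    _ = Eg q * Fg q * Eg q + (q - q⁻¹)⁻¹ •
          ((q ^ 2)⁻¹ • (Kg q * Eg q) - q ^ 2 • (Kinvg q * Eg q)) := by
        rw [E_K q hq, E_Kinv q hq, mul_assoc]
    _ = Eg q * Fg q * Eg q +
          (((q - q⁻¹)⁻¹ * (q ^ 2)⁻¹) • Kg q - ((q - q⁻¹)⁻¹ * q ^ 2) • Kinvg q) * Eg q := by
        rw [sub_mul, smul_mul_assoc, smul_mul_assoc, smul_sub, smul_smul, smul_smul]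

lemma E_Xpow (i : ℕ) :
    Eg q * (Eg q * Fg q) ^ i = (Eg q * Fg q + L q (g q)) ^ i * Eg q := by
  induction i with
  | zero => simp
  | succ i ih =>
      rw [pow_succ', ← mul_assoc, E_X q hq, mul_assoc, ih, pow_succ', mul_assoc]

lemma E_Xpow_F (i : ℕ) :
    Eg q * (Eg q * Fg q) ^ i * Fg q = (Eg q * Fg q + L q (g q)) ^ i * (Eg q * Fg q) := by
  rw [E_Xpow q hq, mul_assoc]

/-- Evaluation of polynomials with Laurent coefficients. -/
def Ψ : Polynomial A →+* Uq q :=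
  Polynomial.eval₂RingHom' (L q).toRingHom (Eg q * Fg q)
    (fun a => (comm_X_L q hq a).symm)

lemma Ψ_C (a : A) : Ψ q hq (Polynomial.C a) = L q a := Polynomial.eval₂_C _ _

lemma Ψ_X : Ψ q hq Polynomial.X = Eg q * Fg q := Polynomial.eval₂_X _ _

/-- The key transformation on polynomials. -/
def τ (p : Polynomial A) : Polynomial A :=
  ((p.map (σ q hq).toRingHom).comp (Polynomial.X + Polynomial.C (g q))) * Polynomial.X

lemma Ψ_apply (p : Polynomial A) :
    Ψ q hq p = Polynomial.eval₂ (L q).toRingHom (Eg q * Fg q) p := rfl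

lemma key (p : Polynomial A) :
    Eg q * Ψ q hq p * Fg q = Ψ q hq (τ q hq p) := by
  induction p using Polynomial.induction_on' with
  | add p r hp hr =>
      rw [map_add, mul_add, add_mul, hp, hr, τ, τ, τ, Polynomial.map_add,
        Polynomial.add_comp, add_mul, map_add]
  | monomial i a =>
      have hΨm : Ψ q hq ((Polynomial.monomial i) a) = L q a * (Eg q * Fg q) ^ i := by
        rw [Ψ_apply, Polynomial.eval₂_monomial]
        rfl
      have hτ : τ q hq ((Polynomial.monomial i) a) =
          Polynomial.C (σ q hq a) *
            (Polynomial.X + Polynomial.C (g q)) ^ i * Polynomial.X := by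
        rw [τ, Polynomial.map_monomial, ← Polynomial.C_mul_X_pow_eq_monomial,
          Polynomial.mul_comp, Polynomial.C_comp, Polynomial.X_pow_comp]
        rfl
      have hcomm1 : Commute (L q (σ q hq a)) (Eg q * Fg q) :=
        (comm_X_L q hq _).symm
      have hcomm2 : Commute (L q (σ q hq a)) (L q (g q)) := by
        unfold Commute SemiconjBy
        rw [← map_mul, ← map_mul, mul_comm]
      have hcomm : Commute (L q (σ q hq a))
          ((Eg q * Fg q + L q (g q)) ^ i * (Eg q * Fg q)) :=
        ((hcomm1.add_right hcomm2).pow_right i).mul_right hcomm1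
      calc Eg q * Ψ q hq ((Polynomial.monomial i) a) * Fg q
          = Eg q * ((Eg q * Fg q) ^ i * L q a) * Fg q := by
            rw [hΨm, ((comm_X_L q hq a).pow_left i).eq]
        _ = (Eg q * (Eg q * Fg q) ^ i) * (L q a * Fg q) := by noncomm_ring
        _ = (Eg q * (Eg q * Fg q) ^ i) * (Fg q * L q (σ q hq a)) := by
            rw [L_mul_F q hq]
        _ = (Eg q * (Eg q * Fg q) ^ i * Fg q) * L q (σ q hq a) := by noncomm_ring
        _ = ((Eg q * Fg q + L q (g q)) ^ i * (Eg q * Fg q)) * L q (σ q hq a) := by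
            rw [E_Xpow_F q hq]
        _ = L q (σ q hq a) * ((Eg q * Fg q + L q (g q)) ^ i * (Eg q * Fg q)) :=
            hcomm.eq.symm
        _ = Ψ q hq (τ q hq ((Polynomial.monomial i) a)) := by
            rw [hτ, map_mul, map_mul, Ψ_C, Ψ_X, map_pow, map_add, Ψ_X, Ψ_C, mul_assoc]

lemma main (n : ℕ) :
    ∃ p : Polynomial A, p.Monic ∧ p.natDegree = n ∧
      Eg q ^ n * Fg q ^ n = Ψ q hq p := by
  induction n with
  | zero => exact ⟨1, Polynomial.monic_one, Polynomial.natDegree_one, by simp⟩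
  | succ n ih =>
      obtain ⟨p, hm, hd, he⟩ := ih
      refine ⟨τ q hq p, ?_, ?_, ?_⟩
      · exact ((hm.map _).comp_X_add_C _).mul Polynomial.monic_X
      · rw [τ, ((hm.map (σ q hq).toRingHom).comp_X_add_C (g q)).natDegree_mul
          Polynomial.monic_X, Polynomial.natDegree_X, Polynomial.natDegree_comp,
          Polynomial.natDegree_X_add_C, mul_one, hm.natDegree_map, hd]
      · rw [pow_succ' (Eg q), pow_succ (Fg q),
          show Eg q * Eg q ^ n * (Fg q ^ n * Fg q)
            = Eg q * (Eg q ^ n * Fg q ^ n) * Fg q by noncomm_ring,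
          he, key q hq]

end Stmt13Aux
end Proof13

theorem stmt13' (q : ℂ) (hq : q ≠ 0)
    (n : ℕ) :
    ∃ c : Fin n → (ℤ →₀ ℂ),
      Eg q ^ n * Fg q ^ n =
        (Eg q * Fg q) ^ n +
          ∑ i : Fin n, (Eg q * Fg q) ^ (i : ℕ) * ((c i).sum fun l a => a • Kz q l) := by
  obtain ⟨p, hm, hd, he⟩ := Stmt13Aux.main q hq n
  refine ⟨fun i => (p.coeff i).coeff, ?_⟩
  rw [he, Stmt13Aux.Ψ_apply, Polynomial.eval₂_eq_sum_range, hd, Finset.sum_range_succ,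
    show p.coeff n = 1 by rw [← hd]; exact hm.coeff_natDegree, map_one, one_mul, add_comm]
  congr 1
  rw [← Fin.sum_univ_eq_sum_range
    (fun i => (Stmt13Aux.L q).toRingHom (p.coeff i) * (Eg q * Fg q) ^ i) n]
  refine Finset.sum_congr rfl fun i _ => ?_
  rw [show ((p.coeff (i : ℕ)).coeff.sum fun l a => a • Kz q l)
      = Stmt13Aux.L q (p.coeff (i : ℕ)) from (Stmt13Aux.L_apply q hq _).symm]
  exact ((Stmt13Aux.comm_X_L q hq (p.coeff (i : ℕ))).pow_left (i : ℕ)).eq.symm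


/-- For every `n ∈ ℕ` there are Laurent polynomials `c₀, …, c_{n-1}` in
`K, K⁻¹` (encoded as finitely supported functions `ℤ →₀ ℂ`, evaluated at `K` via
`c.sum fun l a => a • K^l`) such that `EⁿFⁿ = (EF)ⁿ + Σ_{i=0}^{n-1} (EF)ⁱ cᵢ(K, K⁻¹)`. -/
theorem stmt13 (q : ℂ) (hq : q ≠ 0) (hroot : ∀ m : ℕ, 0 < m → q ^ m ≠ 1)
    (n : ℕ) (hn : 1 ≤ n) :
    ∃ c : Fin n → (ℤ →₀ ℂ),
      Eg q ^ n * Fg q ^ n =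
        (Eg q * Fg q) ^ n +
          ∑ i : Fin n, (Eg q * Fg q) ^ (i : ℕ) * ((c i).sum fun l a => a • Kz q l) := by
  exact stmt13' q hq n
end

section
/- Assume M(C_{λ,μ}) and M(C_{λ',μ'}) are irreducible Mathieu modules for U_q(sl(2,ℂ)). Then M(C_{λ,μ}) ≅ M(C_{λ',μ'}) as U_q(sl(2,ℂ))-modules if and only if there exists n ∈ ℤ such that λ' = λq^{2n} and μ' = μ − (q^{n}−q^{-n})(λq^{n-1}−λ^{-1}q^{1-n})/(q−q^{-1})^2. -/
noncomputable section

/-- The data of the rank-1 Mathieu module `M(C_{λ,μ}) = U_q(sl(2,ℂ)) ⊗_{U_0} C_{λ,μ}`,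
characterized by its universal property: `φ` is the character of `U_0` with `φ(K) = λ` and
`φ(EF) = μ`, the cyclic vector `m0 = 1 ⊗ 1` satisfies `z · m0 = φ(z) m0` for `z ∈ U_0`, and
for every `U_q(sl(2,ℂ))`-module `W` with a vector `w0` on which `U_0` acts through `φ`
there is a unique equivariant linear map `M → W` sending `m0` to `w0`. -/
def IsMathieuSl2 (q lam mu : ℂ) {M : Type} [AddCommGroup M] [Module ℂ M]
    (π : Uq q →ₐ[ℂ] Module.End ℂ M) (m0 : M) (φ : U0c q →ₐ[ℂ] ℂ) : Prop :=
  (∀ h : Kg q ∈ U0c q, φ ⟨Kg q, h⟩ = lam) ∧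
  (∀ h : Eg q * Fg q ∈ U0c q, φ ⟨Eg q * Fg q, h⟩ = mu) ∧
  (∀ z : U0c q, π (z : Uq q) m0 = φ z • m0) ∧
  ∀ (W : Type) [AddCommGroup W] [Module ℂ W],
    ∀ (πW : Uq q →ₐ[ℂ] Module.End ℂ W) (w0 : W),
      (∀ z : U0c q, πW (z : Uq q) w0 = φ z • w0) →
      ∃! Ψ : M →ₗ[ℂ] W, (∀ (X : Uq q) (m : M), Ψ (π X m) = πW X (Ψ m)) ∧ Ψ m0 = w0

/-- The weight basis `{Eⁿ·1} ∪ {1} ∪ {Fⁿ·1}` of a Mathieu module, indexed by `ℤ`. -/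
def bvec (q : ℂ) {M : Type} [AddCommGroup M] [Module ℂ M]
    (π : Uq q →ₐ[ℂ] Module.End ℂ M) (m0 : M) : ℤ → M := fun k =>
  if 0 ≤ k then π (Eg q ^ k.toNat) m0 else π (Fg q ^ (-k).toNat) m0

end

noncomputable section
namespace Sl2
variable (q : ℂ)

lemma rel_KKinv : Kg q * Kinvg q = 1 := by
  simpa [Kg, Kinvg, map_mul] using RingQuot.mkAlgHom_rel ℂ (QRel.KKinv (q := q))

lemma rel_KinvK : Kinvg q * Kg q = 1 := by
  simpa [Kg, Kinvg, map_mul] using RingQuot.mkAlgHom_rel ℂ (QRel.KinvK (q := q))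

lemma rel_KE : Kg q * Eg q = q ^ 2 • (Eg q * Kg q) := by
  simpa [Kg, Eg, map_mul] using RingQuot.mkAlgHom_rel ℂ (QRel.KE (q := q))

lemma rel_KF : Kg q * Fg q = (q ^ 2)⁻¹ • (Fg q * Kg q) := by
  simpa [Kg, Fg, map_mul] using RingQuot.mkAlgHom_rel ℂ (QRel.KF (q := q))

lemma rel_EF : Eg q * Fg q - Fg q * Eg q = (q - q⁻¹)⁻¹ • (Kg q - Kinvg q) := by
  simpa [Kg, Kinvg, Eg, Fg, map_mul, map_sub] using RingQuot.mkAlgHom_rel ℂ (QRel.EF (q := q))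

end Sl2
end
noncomputable section
namespace Sl2
variable (q : ℂ)

lemma q2_ne (hq : q ≠ 0) : (q ^ 2 : ℂ) ≠ 0 := pow_ne_zero _ hq

variable {q}

lemma rel_KinvE (hq : q ≠ 0) : Kinvg q * Eg q = (q ^ 2)⁻¹ • (Eg q * Kinvg q) := by
  have h1 : Kinvg q * (Kg q * Eg q) * Kinvg q = Eg q * Kinvg q := by
    rw [← mul_assoc, rel_KinvK, one_mul]
  rw [rel_KE, mul_smul_comm, smul_mul_assoc, mul_assoc, mul_assoc, rel_KKinv, mul_one] at h1
  rw [← h1, smul_smul, inv_mul_cancel₀ (q2_ne q hq), one_smul]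

lemma rel_KinvF (hq : q ≠ 0) : Kinvg q * Fg q = q ^ 2 • (Fg q * Kinvg q) := by
  have h1 : Kinvg q * (Kg q * Fg q) * Kinvg q = Fg q * Kinvg q := by
    rw [← mul_assoc, rel_KinvK, one_mul]
  rw [rel_KF, mul_smul_comm, smul_mul_assoc, mul_assoc, mul_assoc, rel_KKinv, mul_one] at h1
  rw [← h1, smul_smul, mul_inv_cancel₀ (q2_ne q hq), one_smul]

/-- generic commuting-past-powers lemma -/
lemma comm_pow {A : Type*} [Ring A] [Algebra ℂ A] {g x : A} {c : ℂ}
    (h : g * x = c • (x * g)) (m : ℕ) : g ^ m * x = c ^ m • (x * g ^ m) := by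
  induction m with
  | zero => simp
  | succ n ih =>
      rw [pow_succ, mul_assoc, h, mul_smul_comm, ← mul_assoc, ih, smul_mul_assoc, smul_smul,
        pow_succ, mul_assoc, mul_comm (c ^ n) c]

lemma comm_pow' {A : Type*} [Ring A] [Algebra ℂ A] {g x : A} {c : ℂ}
    (h : g * x = c • (x * g)) (m : ℕ) : g * x ^ m = c ^ m • (x ^ m * g) := by
  induction m with
  | zero => simp
  | succ n ih =>
      rw [pow_succ, ← mul_assoc, ih, smul_mul_assoc, mul_assoc, h, mul_smul_comm, smul_smul,
        pow_succ, ← mul_assoc]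

lemma Kz_mul_E (hq : q ≠ 0) (z : ℤ) : Kz q z * Eg q = q ^ (2 * z) • (Eg q * Kz q z) := by
  unfold Kz
  rcases le_or_gt 0 z with hz | hz
  · rw [if_pos hz, comm_pow (rel_KE q)]
    congr 1
    rw [← pow_mul, ← zpow_natCast]
    congr 1
    omega
  · rw [if_neg (by omega), comm_pow (rel_KinvE hq)]
    congr 1
    rw [← inv_pow, ← pow_mul, ← zpow_natCast, inv_zpow, ← zpow_neg]
    congr 1
    omega

lemma Kz_mul_F (hq : q ≠ 0) (z : ℤ) : Kz q z * Fg q = q ^ (-(2 * z)) • (Fg q * Kz q z) := by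
  unfold Kz
  rcases le_or_gt 0 z with hz | hz
  · rw [if_pos hz, comm_pow (rel_KF q)]
    congr 1
    rw [← inv_pow, ← pow_mul, ← zpow_natCast, inv_zpow, ← zpow_neg]
    congr 1
    omega
  · rw [if_neg (by omega), comm_pow (rel_KinvF hq)]
    congr 1
    rw [← pow_mul, ← zpow_natCast]
    congr 1
    omega

lemma K_mul_Kz (z : ℤ) : Kg q * Kz q z = Kz q (z + 1) := by
  unfold Kz
  rcases le_or_gt 0 z with hz | hz
  · rw [if_pos hz, if_pos (by omega)]
    have h : (z + 1).toNat = z.toNat + 1 := by omega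
    rw [h, pow_succ']
  · rw [if_neg (by omega)]
    rcases le_or_gt 0 (z + 1) with hz1 | hz1
    · have hz' : z = -1 := by omega
      subst hz'
      norm_num [rel_KKinv]
    · rw [if_neg (by omega)]
      have h : (-z).toNat = (-(z + 1)).toNat + 1 := by omega
      rw [h, pow_succ', ← mul_assoc, rel_KKinv, one_mul]

lemma Kinv_mul_Kz (z : ℤ) : Kinvg q * Kz q z = Kz q (z - 1) := by
  unfold Kz
  rcases le_or_gt 0 z with hz | hz
  · rcases le_or_gt 0 (z - 1) with hz1 | hz1
    · rw [if_pos hz, if_pos hz1]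
      have h : z.toNat = (z - 1).toNat + 1 := by omega
      rw [h, pow_succ', ← mul_assoc, rel_KinvK, one_mul]
    · have hz' : z = 0 := by omega
      subst hz'
      norm_num
  · rw [if_neg (by omega), if_neg (by omega)]
    have h : (-(z - 1)).toNat = (-z).toNat + 1 := by omega
    rw [h, pow_succ']

end Sl2
end
noncomputable section
namespace Sl2
variable (q : ℂ)

lemma gen_top : Algebra.adjoin ℂ {Eg q, Fg q, Kg q, Kinvg q} = ⊤ := by
  rw [eq_top_iff]
  rintro x -
  obtain ⟨y, rfl⟩ := RingQuot.mkAlgHom_surjective ℂ (QRel q) x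
  have h1 : (RingQuot.mkAlgHom ℂ (QRel q)) y ∈
      (Algebra.adjoin ℂ (Set.range (FreeAlgebra.ι ℂ))).map (RingQuot.mkAlgHom ℂ (QRel q)) :=
    ⟨y, by rw [FreeAlgebra.adjoin_range_ι]; trivial, rfl⟩
  rw [AlgHom.map_adjoin] at h1
  refine Algebra.adjoin_mono ?_ h1
  rintro _ ⟨_, ⟨g, rfl⟩, rfl⟩
  cases g <;> simp [Eg, Fg, Kg, Kinvg]

variable {q}

lemma eq_top_of_gens {S : Subalgebra ℂ (Uq q)} (hE : Eg q ∈ S) (hF : Fg q ∈ S)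
    (hK : Kg q ∈ S) (hKinv : Kinvg q ∈ S) : S = ⊤ := by
  rw [eq_top_iff, ← gen_top q]
  refine Algebra.adjoin_le ?_
  intro x hx
  simp only [Set.mem_insert_iff, Set.mem_singleton_iff] at hx
  rcases hx with rfl | rfl | rfl | rfl <;> assumption

lemma algHom_ext {B : Type*} [Semiring B] [Algebra ℂ B] {f g : Uq q →ₐ[ℂ] B}
    (hE : f (Eg q) = g (Eg q)) (hF : f (Fg q) = g (Fg q))
    (hK : f (Kg q) = g (Kg q)) (hKinv : f (Kinvg q) = g (Kinvg q)) : f = g := by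
  have h : AlgHom.equalizer f g = ⊤ := eq_top_of_gens hE hF hK hKinv
  exact AlgHom.ext fun x => (h ▸ Algebra.mem_top : x ∈ AlgHom.equalizer f g)

lemma E_mul_F : Eg q * Fg q = Fg q * Eg q + (q - q⁻¹)⁻¹ • Kg q - (q - q⁻¹)⁻¹ • Kinvg q := by
  have h := rel_EF q
  rw [smul_sub] at h
  rw [eq_add_of_sub_eq h]
  abel

lemma F_mul_E : Fg q * Eg q = Eg q * Fg q - (q - q⁻¹)⁻¹ • Kg q + (q - q⁻¹)⁻¹ • Kinvg q := by
  rw [E_mul_F]; abel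

lemma E_mul_Fpow (hq : q ≠ 0) (a : ℕ) : ∃ x y : ℂ,
    Eg q * Fg q ^ (a + 1) =
      Fg q ^ (a + 1) * Eg q + x • (Fg q ^ a * Kg q) + y • (Fg q ^ a * Kinvg q) := by
  induction a with
  | zero =>
      refine ⟨(q - q⁻¹)⁻¹, -(q - q⁻¹)⁻¹, ?_⟩
      simp only [zero_add, pow_one, pow_zero, one_mul]
      rw [E_mul_F]
      module
  | succ n ih =>
      obtain ⟨x, y, ih⟩ := ih
      refine ⟨x * (q ^ 2)⁻¹ + (q - q⁻¹)⁻¹, y * q ^ 2 - (q - q⁻¹)⁻¹, ?_⟩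
      have h1 : Eg q * Fg q ^ (n + 1 + 1) = (Eg q * Fg q ^ (n + 1)) * Fg q := by
        rw [mul_assoc, ← pow_succ]
      rw [h1, ih]
      simp only [add_mul, smul_mul_assoc, mul_assoc, rel_KF q, rel_KinvF hq, E_mul_F,
        pow_succ, mul_add, mul_sub, mul_smul_comm, smul_smul, smul_add, smul_sub]
      module

lemma EF_mul_E : (Eg q * Fg q) * Eg q =
    Eg q * (Eg q * Fg q) - (q - q⁻¹)⁻¹ • (Eg q * Kg q) + (q - q⁻¹)⁻¹ • (Eg q * Kinvg q) := by
  rw [mul_assoc, F_mul_E]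
  simp only [mul_add, mul_sub, mul_smul_comm]

lemma EF_mul_Epow (hq : q ≠ 0) (c : ℕ) : ∃ x y : ℂ,
    (Eg q * Fg q) * Eg q ^ c =
      Eg q ^ c * (Eg q * Fg q) + x • (Eg q ^ c * Kg q) + y • (Eg q ^ c * Kinvg q) := by
  induction c with
  | zero => exact ⟨0, 0, by simp⟩
  | succ n ih =>
      obtain ⟨x, y, ih⟩ := ih
      refine ⟨x - (q - q⁻¹)⁻¹ * (q ^ 2) ^ n, y + (q - q⁻¹)⁻¹ * ((q ^ 2)⁻¹) ^ n, ?_⟩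
      have h1 : (Eg q * Fg q) * Eg q ^ (n + 1) = ((Eg q * Fg q) * Eg q) * Eg q ^ n := by
        rw [pow_succ', ← mul_assoc]
      rw [h1, EF_mul_E, add_mul, sub_mul, smul_mul_assoc, smul_mul_assoc,
        mul_assoc (Eg q) (Eg q * Fg q) (Eg q ^ n), ih,
        mul_assoc (Eg q) (Kg q) (Eg q ^ n), comm_pow' (rel_KE q) n,
        mul_assoc (Eg q) (Kinvg q) (Eg q ^ n), comm_pow' (rel_KinvE hq) n]
      simp only [mul_add, mul_smul_comm, smul_smul, pow_succ', mul_assoc]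
      module

/-- The subalgebra generated by `EF, K, K⁻¹`. -/
def A0 (q : ℂ) : Subalgebra ℂ (Uq q) := Algebra.adjoin ℂ {Eg q * Fg q, Kg q, Kinvg q}

lemma EF_mem : Eg q * Fg q ∈ A0 q := Algebra.subset_adjoin (by simp)
lemma K_mem_A0 : Kg q ∈ A0 q := Algebra.subset_adjoin (by simp)
lemma Kinv_mem_A0 : Kinvg q ∈ A0 q := Algebra.subset_adjoin (by simp)

lemma Kz_mem {S : Subalgebra ℂ (Uq q)} (hK : Kg q ∈ S) (hKinv : Kinvg q ∈ S) (z : ℤ) :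
    Kz q z ∈ S := by
  unfold Kz; split <;> exact pow_mem ‹_› _

lemma FpowEpow_mem (hq : q ≠ 0) (a : ℕ) : Fg q ^ a * Eg q ^ a ∈ A0 q := by
  induction a with
  | zero => simpa using one_mem (A0 q)
  | succ n ih =>
      obtain ⟨x, y, h⟩ := EF_mul_Epow hq n
      have key : Fg q ^ (n + 1) * Eg q ^ (n + 1) =
          (Fg q ^ n * Eg q ^ n) * (Eg q * Fg q)
            + (x - (q - q⁻¹)⁻¹ * (q ^ 2) ^ n) • ((Fg q ^ n * Eg q ^ n) * Kg q)
            + (y + (q - q⁻¹)⁻¹ * ((q ^ 2)⁻¹) ^ n) • ((Fg q ^ n * Eg q ^ n) * Kinvg q) := by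
        have h2 : Fg q ^ (n + 1) * Eg q ^ (n + 1) = Fg q ^ n * ((Fg q * Eg q) * Eg q ^ n) := by
          rw [pow_succ, pow_succ', mul_assoc, ← mul_assoc (Fg q) (Eg q) (Eg q ^ n)]
        rw [h2, F_mul_E, add_mul, sub_mul, smul_mul_assoc, smul_mul_assoc, h,
          comm_pow' (rel_KE q) n, comm_pow' (rel_KinvE hq) n]
        simp only [mul_add, mul_sub, mul_smul_comm, smul_smul, mul_assoc]
        module
      rw [key]
      refine add_mem (add_mem (mul_mem ih (EF_mem)) ?_) ?_
      · exact Subalgebra.smul_mem _ (mul_mem ih K_mem_A0) _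
      · exact Subalgebra.smul_mem _ (mul_mem ih Kinv_mem_A0) _

end Sl2
end
noncomputable section
namespace Sl2
variable {q : ℂ}

/-! ### The scaling automorphisms τ_s -/

def tauF (q : ℂ) (s : ℂˣ) : QGen → Uq q
  | .E => (s : ℂ) • Eg q
  | .F => ((s⁻¹ : ℂˣ) : ℂ) • Fg q
  | .K => Kg q
  | .Kinv => Kinvg q

def tau (q : ℂ) (s : ℂˣ) : Uq q →ₐ[ℂ] Uq q :=
  RingQuot.liftAlgHom ℂ ⟨FreeAlgebra.lift ℂ (tauF q s), by
    rintro x y r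
    cases r with
    | KKinv => simp [tauF, FreeAlgebra.lift_ι_apply, rel_KKinv]
    | KinvK => simp [tauF, FreeAlgebra.lift_ι_apply, rel_KinvK]
    | KE =>
        simp only [map_mul, map_smul, FreeAlgebra.lift_ι_apply, tauF, mul_smul_comm,
          smul_mul_assoc, smul_smul, rel_KE]
        module
    | KF =>
        simp only [map_mul, map_smul, FreeAlgebra.lift_ι_apply, tauF, mul_smul_comm,
          smul_mul_assoc, smul_smul, rel_KF]
        module
    | EF =>
        simp only [map_mul, map_sub, map_smul, FreeAlgebra.lift_ι_apply, tauF, mul_smul_comm,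
          smul_mul_assoc, smul_smul, Units.val_inv_eq_inv_val,
          mul_inv_cancel₀ (Units.ne_zero s), inv_mul_cancel₀ (Units.ne_zero s), one_smul]
        exact rel_EF q⟩

lemma tau_E (s : ℂˣ) : tau q s (Eg q) = (s : ℂ) • Eg q := by
  simp [tau, Eg, RingQuot.liftAlgHom_mkAlgHom_apply, FreeAlgebra.lift_ι_apply, tauF]

lemma tau_F (s : ℂˣ) : tau q s (Fg q) = ((s⁻¹ : ℂˣ) : ℂ) • Fg q := by
  simp [tau, Fg, RingQuot.liftAlgHom_mkAlgHom_apply, FreeAlgebra.lift_ι_apply, tauF]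

lemma tau_K (s : ℂˣ) : tau q s (Kg q) = Kg q := by
  simp [tau, Kg, RingQuot.liftAlgHom_mkAlgHom_apply, FreeAlgebra.lift_ι_apply, tauF]

lemma tau_Kinv (s : ℂˣ) : tau q s (Kinvg q) = Kinvg q := by
  simp [tau, Kinvg, RingQuot.liftAlgHom_mkAlgHom_apply, FreeAlgebra.lift_ι_apply, tauF]

lemma tau_Kz (s : ℂˣ) (z : ℤ) : tau q s (Kz q z) = Kz q z := by
  unfold Kz
  split <;> rw [map_pow] <;> simp [tau_K, tau_Kinv]

def conjA (q : ℂ) : Uq q →ₐ[ℂ] Uq q where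
  toFun x := Kg q * x * Kinvg q
  map_one' := by show Kg q * 1 * Kinvg q = 1; rw [mul_one, rel_KKinv]
  map_mul' x y := by
    show Kg q * (x * y) * Kinvg q = (Kg q * x * Kinvg q) * (Kg q * y * Kinvg q)
    have : Kg q * x * Kinvg q * (Kg q * y * Kinvg q)
        = Kg q * x * ((Kinvg q * Kg q) * y) * Kinvg q := by
      simp only [mul_assoc]
    rw [this, rel_KinvK, one_mul, mul_assoc (Kg q) x y]
  map_zero' := by simp
  map_add' x y := by
    show Kg q * (x + y) * Kinvg q = Kg q * x * Kinvg q + Kg q * y * Kinvg q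
    rw [mul_add, add_mul]
  commutes' c := by
    show Kg q * algebraMap ℂ (Uq q) c * Kinvg q = algebraMap ℂ (Uq q) c
    rw [mul_assoc, Algebra.commutes c (Kinvg q), ← mul_assoc, rel_KKinv, one_mul]

lemma conjA_apply (x : Uq q) : conjA q x = Kg q * x * Kinvg q := rfl

lemma tau_q2 (hq : q ≠ 0) : tau q (Units.mk0 (q ^ 2) (q2_ne q hq)) = conjA q := by
  apply algHom_ext
  · rw [tau_E, conjA_apply, rel_KE, smul_mul_assoc, mul_assoc, rel_KKinv, mul_one]
    rfl
  · rw [tau_F, conjA_apply, rel_KF, smul_mul_assoc, mul_assoc, rel_KKinv, mul_one]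
    norm_num
  · rw [tau_K, conjA_apply, mul_assoc, rel_KKinv, mul_one]
  · rw [tau_Kinv, conjA_apply, rel_KKinv, one_mul]

lemma tau_mul (s s' : ℂˣ) : tau q (s * s') = (tau q s).comp (tau q s') := by
  apply algHom_ext <;>
    simp [tau_E, tau_F, tau_K, tau_Kinv, smul_smul, mul_comm]

lemma tau_one : tau q 1 = AlgHom.id ℂ (Uq q) := by
  apply algHom_ext <;> simp [tau_E, tau_F, tau_K, tau_Kinv]

lemma central_tau (hq : q ≠ 0) {u : Uq q} (hu : u ∈ U0c q) (m : ℕ) :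
    tau q ((Units.mk0 (q ^ 2) (q2_ne q hq)) ^ m) u = u := by
  induction m with
  | zero => rw [pow_zero, tau_one]; rfl
  | succ n ih =>
      rw [pow_succ, mul_comm, tau_mul, AlgHom.comp_apply, ih, tau_q2 hq, conjA_apply]
      have hcomm : Kg q * u = u * Kg q :=
        (Subalgebra.mem_centralizer_iff ℂ).mp hu (Kg q) rfl
      rw [hcomm, mul_assoc, rel_KKinv, mul_one]

/-! ### PBW-type spanning -/

/-- monomials of degree `d` -/
def Bd (q : ℂ) (d : ℤ) : Set (Uq q) :=
  {x | ∃ (a b : ℕ) (z : ℤ), (b : ℤ) - (a : ℤ) = d ∧ x = Fg q ^ a * (Kz q z * Eg q ^ b)}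

def TT (q : ℂ) : Submodule ℂ (Uq q) := Submodule.span ℂ (⋃ d, Bd q d)

lemma mono_mem_TT (a b : ℕ) (z : ℤ) : Fg q ^ a * (Kz q z * Eg q ^ b) ∈ TT q :=
  Submodule.subset_span (Set.mem_iUnion.mpr ⟨(b : ℤ) - (a : ℤ), a, b, z, rfl, rfl⟩)

lemma E_mul_KzEpow (hq : q ≠ 0) (z : ℤ) (b : ℕ) :
    Eg q * (Kz q z * Eg q ^ b) = (q ^ (2 * z))⁻¹ • (Kz q z * Eg q ^ (b + 1)) := by
  have hne : (q : ℂ) ^ (2 * z) ≠ 0 := zpow_ne_zero _ hq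
  have h : Eg q * Kz q z = (q ^ (2 * z))⁻¹ • (Kz q z * Eg q) := by
    rw [Kz_mul_E hq, smul_smul, inv_mul_cancel₀ hne, one_smul]
  rw [← mul_assoc, h, smul_mul_assoc, mul_assoc, ← pow_succ']

lemma F_mul_mono (a b : ℕ) (z : ℤ) :
    Fg q * (Fg q ^ a * (Kz q z * Eg q ^ b)) ∈ TT q := by
  have h : Fg q * (Fg q ^ a * (Kz q z * Eg q ^ b)) = Fg q ^ (a + 1) * (Kz q z * Eg q ^ b) := by
    rw [pow_succ', mul_assoc]
  rw [h]; exact mono_mem_TT _ _ _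

lemma K_mul_mono (a b : ℕ) (z : ℤ) :
    Kg q * (Fg q ^ a * (Kz q z * Eg q ^ b)) ∈ TT q := by
  have h : Kg q * (Fg q ^ a * (Kz q z * Eg q ^ b))
      = ((q ^ 2)⁻¹) ^ a • (Fg q ^ a * (Kz q (z + 1) * Eg q ^ b)) := by
    rw [← mul_assoc, comm_pow' (rel_KF q) a, smul_mul_assoc, mul_assoc, ← mul_assoc (Kg q),
      K_mul_Kz]
  rw [h]; exact Submodule.smul_mem _ _ (mono_mem_TT _ _ _)

lemma Kinv_mul_mono (hq : q ≠ 0) (a b : ℕ) (z : ℤ) :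
    Kinvg q * (Fg q ^ a * (Kz q z * Eg q ^ b)) ∈ TT q := by
  have h : Kinvg q * (Fg q ^ a * (Kz q z * Eg q ^ b))
      = (q ^ 2) ^ a • (Fg q ^ a * (Kz q (z - 1) * Eg q ^ b)) := by
    rw [← mul_assoc, comm_pow' (rel_KinvF hq) a, smul_mul_assoc, mul_assoc, ← mul_assoc (Kinvg q),
      Kinv_mul_Kz]
  rw [h]; exact Submodule.smul_mem _ _ (mono_mem_TT _ _ _)

lemma E_mul_mono (hq : q ≠ 0) (a b : ℕ) (z : ℤ) :
    Eg q * (Fg q ^ a * (Kz q z * Eg q ^ b)) ∈ TT q := by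
  cases a with
  | zero =>
      rw [pow_zero, one_mul, E_mul_KzEpow hq]
      have h : Kz q z * Eg q ^ (b + 1) = Fg q ^ 0 * (Kz q z * Eg q ^ (b + 1)) := by
        rw [pow_zero, one_mul]
      rw [h]
      exact Submodule.smul_mem _ _ (mono_mem_TT _ _ _)
  | succ n =>
      obtain ⟨x, y, hxy⟩ := E_mul_Fpow hq n
      have h : Eg q * (Fg q ^ (n + 1) * (Kz q z * Eg q ^ b))
          = (Eg q * Fg q ^ (n + 1)) * (Kz q z * Eg q ^ b) := by rw [mul_assoc]
      rw [h, hxy, add_mul, add_mul, smul_mul_assoc, smul_mul_assoc]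
      refine add_mem (add_mem ?_ ?_) ?_
      · rw [mul_assoc, E_mul_KzEpow hq, mul_smul_comm]
        exact Submodule.smul_mem _ _ (mono_mem_TT _ _ _)
      · have h2 : Fg q ^ n * Kg q * (Kz q z * Eg q ^ b)
            = Fg q ^ n * (Kz q (z + 1) * Eg q ^ b) := by
          rw [mul_assoc, ← mul_assoc (Kg q), K_mul_Kz]
        rw [h2]
        exact Submodule.smul_mem _ _ (mono_mem_TT _ _ _)
      · have h2 : Fg q ^ n * Kinvg q * (Kz q z * Eg q ^ b)
            = Fg q ^ n * (Kz q (z - 1) * Eg q ^ b) := by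
          rw [mul_assoc, ← mul_assoc (Kinvg q), Kinv_mul_Kz]
        rw [h2]
        exact Submodule.smul_mem _ _ (mono_mem_TT _ _ _)

def lmulStable (q : ℂ) (T : Submodule ℂ (Uq q)) : Subalgebra ℂ (Uq q) where
  carrier := {x | ∀ y ∈ T, x * y ∈ T}
  mul_mem' := fun {a b} ha hb y hy => by rw [mul_assoc]; exact ha _ (hb _ hy)
  one_mem' := fun y hy => by rwa [one_mul]
  add_mem' := fun {a b} ha hb y hy => by rw [add_mul]; exact add_mem (ha _ hy) (hb _ hy)
  zero_mem' := fun y hy => by rw [zero_mul]; exact zero_mem T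
  algebraMap_mem' := fun c y hy => by rw [← Algebra.smul_def]; exact T.smul_mem c hy

lemma gen_mem_lmulStable {g : Uq q} (hg : ∀ x ∈ ⋃ d, Bd q d, g * x ∈ TT q) :
    g ∈ lmulStable q (TT q) := by
  intro y hy
  induction hy using Submodule.span_induction with
  | mem x hx => exact hg x hx
  | zero => rw [mul_zero]; exact zero_mem _
  | add u v _ _ hu hv => rw [mul_add]; exact add_mem hu hv
  | smul c u _ hu => rw [mul_smul_comm]; exact Submodule.smul_mem _ _ hu

lemma TT_eq_top (hq : q ≠ 0) : TT q = ⊤ := by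
  have hC : lmulStable q (TT q) = ⊤ := by
    apply eq_top_of_gens
    · exact gen_mem_lmulStable (by rintro x ⟨_, ⟨d, rfl⟩, a, b, z, hd, rfl⟩; exact E_mul_mono hq a b z)
    · exact gen_mem_lmulStable (by rintro x ⟨_, ⟨d, rfl⟩, a, b, z, hd, rfl⟩; exact F_mul_mono a b z)
    · exact gen_mem_lmulStable (by rintro x ⟨_, ⟨d, rfl⟩, a, b, z, hd, rfl⟩; exact K_mul_mono a b z)
    · exact gen_mem_lmulStable (by rintro x ⟨_, ⟨d, rfl⟩, a, b, z, hd, rfl⟩; exact Kinv_mul_mono hq a b z)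
  have hone : (1 : Uq q) ∈ TT q := by
    have h : (1 : Uq q) = Fg q ^ 0 * (Kz q 0 * Eg q ^ 0) := by
      unfold Kz
      norm_num
    rw [h]; exact mono_mem_TT _ _ _
  rw [eq_top_iff]
  intro u _
  have hu : u ∈ lmulStable q (TT q) := hC ▸ Algebra.mem_top
  simpa using hu 1 hone

/-! ### Vandermonde -/

lemma vandermonde_finsupp {V : Type*} [AddCommGroup V] [Module ℂ V] (w : ℤ →₀ V) (x : ℤ → ℂ)
    (hx : Function.Injective x) (h : ∀ m : ℕ, (w.sum fun d v => x d ^ m • v) = 0) : w = 0 := by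
  have hpoly : ∀ p : Polynomial ℂ, (w.sum fun d v => (p.eval (x d)) • v) = 0 := by
    intro p
    induction p using Polynomial.induction_on' with
    | add p r hp hr =>
        have : (w.sum fun d v => ((p + r).eval (x d)) • v)
            = (w.sum fun d v => (p.eval (x d)) • v) + (w.sum fun d v => (r.eval (x d)) • v) := by
          rw [← Finsupp.sum_add]
          congr 1
          ext d v
          rw [Polynomial.eval_add, add_smul]
        rw [this, hp, hr, add_zero]
    | monomial m c =>
        have : (w.sum fun d v => ((Polynomial.monomial m c).eval (x d)) • v)
            = c • (w.sum fun d v => x d ^ m • v) := by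
          rw [Finsupp.smul_sum]
          congr 1
          ext d v
          rw [Polynomial.eval_monomial, mul_smul]
        rw [this, h m, smul_zero]
  ext d0
  by_contra hd0
  have hd0' : d0 ∈ w.support := Finsupp.mem_support_iff.mpr (by simpa using hd0)
  set P : Polynomial ℂ :=
    ∏ d ∈ w.support.erase d0, (Polynomial.X - Polynomial.C (x d)) with hP
  have hkey := hpoly P
  rw [Finsupp.sum, Finset.sum_eq_single d0] at hkey
  · have hPval : P.eval (x d0) ≠ 0 := by
      rw [hP, Polynomial.eval_prod]
      refine Finset.prod_ne_zero_iff.mpr fun d hd => ?_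
      simp only [Polynomial.eval_sub, Polynomial.eval_X, Polynomial.eval_C, sub_ne_zero]
      exact fun hxy => (Finset.mem_erase.mp hd).1 (hx hxy).symm
    have := smul_eq_zero.mp hkey
    rcases this with h1 | h1
    · exact hPval h1
    · exact hd0 (by simpa using h1)
  · intro d hd hne
    have : P.eval (x d) = 0 := by
      rw [hP, Polynomial.eval_prod]
      exact Finset.prod_eq_zero (Finset.mem_erase.mpr ⟨hne, hd⟩) (by simp)
    rw [this, zero_smul]
  · intro hns
    simp [Finsupp.notMem_support_iff.mp hns]

end Sl2
end
noncomputable section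
namespace Sl2
variable {q : ℂ}

lemma zpow_eq_one_imp (hq : q ≠ 0) (hroot : ∀ m : ℕ, 0 < m → q ^ m ≠ 1) {k : ℤ}
    (h : q ^ k = 1) : k = 0 := by
  rcases lt_trichotomy k 0 with hk | hk | hk
  · exfalso
    apply hroot (-k).toNat (by omega)
    have : ((-k).toNat : ℤ) = -k := by omega
    rw [← zpow_natCast, this, zpow_neg, h, inv_one]
  · exact hk
  · exfalso
    apply hroot k.toNat (by omega)
    have : (k.toNat : ℤ) = k := by omega
    rw [← zpow_natCast, this, h]

lemma q2_zpow_inj (hq : q ≠ 0) (hroot : ∀ m : ℕ, 0 < m → q ^ m ≠ 1) :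
    Function.Injective (fun d : ℤ => (q ^ 2 : ℂ) ^ d) := by
  intro d e h
  simp only at h
  have h2 : (q ^ 2 : ℂ) ^ (d - e) = 1 := by
    rw [zpow_sub₀ (q2_ne q hq), h, div_self (zpow_ne_zero _ (q2_ne q hq))]
  have h3 : (q : ℂ) ^ ((2 : ℤ) * (d - e)) = 1 := by
    rw [zpow_mul, show ((2 : ℤ)) = ((2 : ℕ) : ℤ) by norm_num, zpow_natCast]
    exact h2
  have := zpow_eq_one_imp hq hroot h3
  omega

lemma tau_span_Bd (hq : q ≠ 0) (s : ℂˣ) {d : ℤ} {v : Uq q}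
    (hv : v ∈ Submodule.span ℂ (Bd q d)) : tau q s v = ((s : ℂ) ^ d) • v := by
  induction hv using Submodule.span_induction with
  | mem x hx =>
      obtain ⟨a, b, z, hd, rfl⟩ := hx
      simp only [map_mul, map_pow, tau_E, tau_F, tau_Kz, smul_pow, smul_mul_assoc,
        mul_smul_comm, smul_smul]
      congr 1
      rw [Units.val_inv_eq_inv_val, inv_pow, ← zpow_natCast (s : ℂ) a, ← zpow_natCast (s : ℂ) b,
        ← zpow_neg, ← zpow_add₀ (Units.ne_zero s), ← hd]
      ring_nf
  | zero => simp
  | add u v _ _ hu hv => rw [map_add, hu, hv, smul_add]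
  | smul c u _ hu => rw [map_smul, hu, smul_comm]

lemma U0c_le_A0 (hq : q ≠ 0) (hroot : ∀ m : ℕ, 0 < m → q ^ m ≠ 1) {u : Uq q}
    (hu : u ∈ U0c q) : u ∈ A0 q := by
  classical
  have hmem : u ∈ ⨆ d : ℤ, Submodule.span ℂ (Bd q d) := by
    have h1 : u ∈ TT q := by rw [TT_eq_top hq]; trivial
    rwa [TT, Submodule.span_iUnion] at h1
  obtain ⟨f, hf, hsum⟩ := (Submodule.mem_iSup_iff_exists_finsupp _ _).mp hmem
  set U : ℂˣ := Units.mk0 (q ^ 2) (q2_ne q hq) with hU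
  have hpow : ∀ (m : ℕ) (d : ℤ), ((U ^ m : ℂˣ) : ℂ) ^ d = ((q ^ 2 : ℂ) ^ d) ^ m := by
    intro m d
    rw [Units.val_pow_eq_pow_val, hU, Units.val_mk0,
      ← zpow_natCast (q ^ 2 : ℂ) m, ← zpow_mul, ← zpow_natCast ((q ^ 2 : ℂ) ^ d) m, ← zpow_mul,
      mul_comm]
  have key : ∀ m : ℕ, (f.sum fun d v => ((q ^ 2 : ℂ) ^ d) ^ m • v) = u := by
    intro m
    have h1 : tau q (U ^ m) u = u := central_tau hq hu m
    rw [← hsum] at h1 ⊢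
    rw [map_finsuppSum] at h1
    rw [← h1]
    apply Finsupp.sum_congr
    intro d hd
    rw [tau_span_Bd hq _ (hf d), hpow]
  have hvan : f - Finsupp.single 0 u = 0 := by
    apply vandermonde_finsupp _ (fun d => (q ^ 2 : ℂ) ^ d) (q2_zpow_inj hq hroot)
    intro m
    rw [Finsupp.sum_sub_index (fun a b₁ b₂ => smul_sub _ _ _), key m]
    have hsing : (Finsupp.single (0 : ℤ) u).sum (fun d v => ((q ^ 2 : ℂ) ^ d) ^ m • v)
        = ((q ^ 2 : ℂ) ^ (0 : ℤ)) ^ m • u := Finsupp.sum_single_index (smul_zero _)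
    rw [hsing, zpow_zero, one_pow, one_smul, sub_self]
  have hf0 : f 0 = u := by
    have h4 : f = Finsupp.single 0 u := eq_of_sub_eq_zero hvan
    rw [h4, Finsupp.single_eq_same]
  have hspan : Submodule.span ℂ (Bd q 0) ≤ (Subalgebra.toSubmodule (A0 q)) := by
    rw [Submodule.span_le]
    rintro x ⟨a, b, z, hd, rfl⟩
    have hab : b = a := by omega
    subst hab
    have h2 : Kz q z * Eg q ^ b = ((q ^ (2 * z)) ^ b) • (Eg q ^ b * Kz q z) :=
      comm_pow' (Kz_mul_E hq z) b
    have h3 : Fg q ^ b * (Kz q z * Eg q ^ b)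
        = ((q ^ (2 * z)) ^ b) • ((Fg q ^ b * Eg q ^ b) * Kz q z) := by
      rw [h2, mul_smul_comm, mul_assoc]
    show _ ∈ A0 q
    rw [h3]
    exact Subalgebra.smul_mem _ (mul_mem (FpowEpow_mem hq b) (Kz_mem K_mem_A0 Kinv_mem_A0 z)) _
  exact hf0 ▸ hspan (hf 0)

end Sl2
end
noncomputable section
namespace Sl2
variable {q lam mu : ℂ}

/-! ### the eigenvalue sequence t -/

def tval (q lam mu : ℂ) (n : ℤ) : ℂ :=
  mu - (q ^ n - q ^ (-n)) * (lam * q ^ (n - 1) - lam⁻¹ * q ^ (1 - n)) / (q - q⁻¹) ^ 2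

lemma tval_zero : tval q lam mu 0 = mu := by simp [tval]

lemma qq_ne (hq : q ≠ 0) (hroot : ∀ m : ℕ, 0 < m → q ^ m ≠ 1) : q - q⁻¹ ≠ 0 := by
  intro h
  apply hroot 2 (by norm_num)
  have h2 : q = q⁻¹ := by linear_combination h
  have h3 : q ^ 2 = q * q := sq q
  rw [h3]
  nth_rewrite 2 [h2]
  exact mul_inv_cancel₀ hq

lemma tval_rec (hq : q ≠ 0) (hlam : lam ≠ 0) (hqq : q - q⁻¹ ≠ 0) (k : ℤ) :
    tval q lam mu k - tval q lam mu (k + 1)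
      = (q - q⁻¹)⁻¹ * (lam * q ^ (2 * k) - (lam * q ^ (2 * k))⁻¹) := by
  have ha : q ^ (k : ℤ) ≠ 0 := zpow_ne_zero _ hq
  have e1 : q ^ (k + 1) = q ^ k * q := zpow_add_one₀ hq k
  have e2 : q ^ (-(k + 1)) = (q ^ k * q)⁻¹ := by rw [← e1, zpow_neg]
  have e3 : q ^ (k - 1) = q ^ k / q := by rw [zpow_sub₀ hq, zpow_one]
  have e4 : q ^ (1 - k) = q / q ^ k := by rw [zpow_sub₀ hq, zpow_one]
  have e5 : q ^ (-k : ℤ) = (q ^ k)⁻¹ := zpow_neg q k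
  have e6 : q ^ (2 * k) = q ^ k * q ^ k := by rw [two_mul, zpow_add₀ hq]
  have e8 : q ^ (k + 1 - 1) = q ^ k := by norm_num
  have e9 : q ^ (1 - (k + 1)) = (q ^ k)⁻¹ := by
    rw [show (1 : ℤ) - (k + 1) = -k by ring, e5]
  unfold tval
  rw [e6, e1, e2, e3, e4, e5, e8, e9]
  rw [sub_sub_sub_cancel_left, div_sub_div_same, div_eq_iff (pow_ne_zero 2 hqq), pow_two,
    show (q - q⁻¹)⁻¹ * (lam * (q ^ k * q ^ k) - (lam * (q ^ k * q ^ k))⁻¹) *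
        ((q - q⁻¹) * (q - q⁻¹))
      = (lam * (q ^ k * q ^ k) - (lam * (q ^ k * q ^ k))⁻¹) * ((q - q⁻¹)⁻¹ * (q - q⁻¹)) *
        (q - q⁻¹) by ring, inv_mul_cancel₀ hqq, mul_one]
  simp only [mul_inv, div_eq_mul_inv]
  ring

/-! ### the explicit module -/

abbrev VV : Type := ℤ →₀ ℂ

def mov (c : ℤ → ℂ) (j : ℤ) : Module.End ℂ VV :=
  Finsupp.lsum ℂ (fun k => c k • Finsupp.lsingle (k + j))

@[simp] lemma mov_single (c : ℤ → ℂ) (j k : ℤ) (m : ℂ) :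
    mov c j (Finsupp.single k m) = c k • Finsupp.single (k + j) m := by
  rw [mov, Finsupp.lsum_single, LinearMap.smul_apply, Finsupp.lsingle_apply]

def alf (q lam mu : ℂ) (k : ℤ) : ℂ := if 0 ≤ k then 1 else tval q lam mu (k + 1)
def bet (q lam mu : ℂ) (k : ℤ) : ℂ := if k ≤ 0 then 1 else tval q lam mu k

lemma alf_mul_bet (k : ℤ) :
    alf q lam mu (k - 1) * bet q lam mu k = tval q lam mu k := by
  unfold alf bet
  rcases le_or_gt k 0 with hk | hk
  · rw [if_pos hk, if_neg (by omega), mul_one, sub_add_cancel]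
  · rw [if_pos (by omega), if_neg (by omega), one_mul]

def pigen (q lam mu : ℂ) : QGen → Module.End ℂ VV
  | .E => mov (alf q lam mu) 1
  | .F => mov (bet q lam mu) (-1)
  | .K => mov (fun k => lam * q ^ (2 * k)) 0
  | .Kinv => mov (fun k => (lam * q ^ (2 * k))⁻¹) 0

lemma Kdiag_ne (hq : q ≠ 0) (hlam : lam ≠ 0) (k : ℤ) : lam * q ^ (2 * k) ≠ 0 :=
  mul_ne_zero hlam (zpow_ne_zero _ hq)

def piV (q lam mu : ℂ) (hq : q ≠ 0) (hlam : lam ≠ 0) (hqq : q - q⁻¹ ≠ 0) :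
    Uq q →ₐ[ℂ] Module.End ℂ VV :=
  RingQuot.liftAlgHom ℂ ⟨FreeAlgebra.lift ℂ (pigen q lam mu), by
    rintro x y r
    cases r with
    | KKinv =>
        simp only [map_mul, map_one, FreeAlgebra.lift_ι_apply]
        apply Finsupp.lhom_ext
        intro k m
        simp only [Module.End.mul_apply, pigen, mov_single, map_smul, Module.End.one_apply,
          smul_smul, add_zero]
        rw [inv_mul_cancel₀ (Kdiag_ne hq hlam k), one_smul]
    | KinvK =>
        simp only [map_mul, map_one, FreeAlgebra.lift_ι_apply]
        apply Finsupp.lhom_ext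
        intro k m
        simp only [Module.End.mul_apply, pigen, mov_single, map_smul, Module.End.one_apply,
          smul_smul, add_zero]
        rw [mul_inv_cancel₀ (Kdiag_ne hq hlam k), one_smul]
    | KE =>
        simp only [map_mul, map_smul, FreeAlgebra.lift_ι_apply]
        apply Finsupp.lhom_ext
        intro k m
        simp only [Module.End.mul_apply, pigen, mov_single, map_smul, LinearMap.smul_apply,
          smul_smul, add_zero]
        congr 1
        rw [show (2 : ℤ) * (k + 1) = 2 * k + ((2 : ℕ) : ℤ) by push_cast; ring,
          zpow_add₀ hq, zpow_natCast]
        ring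
    | KF =>
        simp only [map_mul, map_smul, FreeAlgebra.lift_ι_apply]
        apply Finsupp.lhom_ext
        intro k m
        simp only [Module.End.mul_apply, pigen, mov_single, map_smul, LinearMap.smul_apply,
          smul_smul, add_zero]
        congr 1
        rw [show (2 : ℤ) * (k + -1) = 2 * k - ((2 : ℕ) : ℤ) by push_cast; ring,
          zpow_sub₀ hq, zpow_natCast]
        field_simp
    | EF =>
        simp only [map_mul, map_sub, map_smul, FreeAlgebra.lift_ι_apply]
        apply Finsupp.lhom_ext
        intro k m
        simp only [LinearMap.sub_apply, Module.End.mul_apply, pigen, mov_single, map_smul,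
          LinearMap.smul_apply, smul_smul, add_zero]
        simp only [neg_add_cancel_right, add_neg_cancel_right]
        rw [← sub_smul, ← sub_smul, smul_smul]
        congr 1
        have e1 : k + -1 = k - 1 := (sub_eq_add_neg k 1).symm
        rw [e1, mul_comm (bet q lam mu k), alf_mul_bet]
        have e2 : alf q lam mu k * bet q lam mu (k + 1) = tval q lam mu (k + 1) := by
          have h3 := alf_mul_bet (q := q) (lam := lam) (mu := mu) (k + 1)
          rwa [add_sub_cancel_right] at h3
        rw [e2, tval_rec hq hlam hqq k]⟩

end Sl2
end
noncomputable section
namespace Sl2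
variable {q lam mu : ℂ} (hq : q ≠ 0) (hlam : lam ≠ 0) (hqq : q - q⁻¹ ≠ 0)

lemma piV_Eg : piV q lam mu hq hlam hqq (Eg q) = mov (alf q lam mu) 1 := by
  rw [piV, Eg, RingQuot.liftAlgHom_mkAlgHom_apply, FreeAlgebra.lift_ι_apply]; rfl

lemma piV_Fg : piV q lam mu hq hlam hqq (Fg q) = mov (bet q lam mu) (-1) := by
  rw [piV, Fg, RingQuot.liftAlgHom_mkAlgHom_apply, FreeAlgebra.lift_ι_apply]; rfl

lemma piV_Kg : piV q lam mu hq hlam hqq (Kg q) = mov (fun k => lam * q ^ (2 * k)) 0 := by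
  rw [piV, Kg, RingQuot.liftAlgHom_mkAlgHom_apply, FreeAlgebra.lift_ι_apply]; rfl

lemma piV_Kinvg : piV q lam mu hq hlam hqq (Kinvg q) = mov (fun k => (lam * q ^ (2 * k))⁻¹) 0 := by
  rw [piV, Kinvg, RingQuot.liftAlgHom_mkAlgHom_apply, FreeAlgebra.lift_ι_apply]; rfl

lemma piV_K_single (k : ℤ) (m : ℂ) :
    piV q lam mu hq hlam hqq (Kg q) (Finsupp.single k m)
      = (lam * q ^ (2 * k)) • Finsupp.single k m := by
  rw [piV_Kg, mov_single, add_zero]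

lemma piV_Kinv_single (k : ℤ) (m : ℂ) :
    piV q lam mu hq hlam hqq (Kinvg q) (Finsupp.single k m)
      = (lam * q ^ (2 * k))⁻¹ • Finsupp.single k m := by
  rw [piV_Kinvg, mov_single, add_zero]

lemma piV_E_single (k : ℤ) (m : ℂ) :
    piV q lam mu hq hlam hqq (Eg q) (Finsupp.single k m)
      = alf q lam mu k • Finsupp.single (k + 1) m := by
  rw [piV_Eg, mov_single]

lemma piV_F_single (k : ℤ) (m : ℂ) :
    piV q lam mu hq hlam hqq (Fg q) (Finsupp.single k m)
      = bet q lam mu k • Finsupp.single (k - 1) m := by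
  rw [piV_Fg, mov_single, sub_eq_add_neg]

lemma piV_EF_single (k : ℤ) (m : ℂ) :
    piV q lam mu hq hlam hqq (Eg q * Fg q) (Finsupp.single k m)
      = tval q lam mu k • Finsupp.single k m := by
  rw [map_mul, Module.End.mul_apply, piV_F_single, map_smul, piV_E_single, smul_smul,
    sub_add_cancel, mul_comm, alf_mul_bet]

lemma mov0_apply (c : ℤ → ℂ) (v : VV) (k : ℤ) : (mov c 0 v) k = c k * v k := by
  induction v using Finsupp.induction_linear with
  | zero => simp
  | add f g hf hg => rw [map_add, Finsupp.add_apply, hf, hg, Finsupp.add_apply, mul_add]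
  | single a b =>
      rw [mov_single, add_zero, Finsupp.smul_apply, Finsupp.single_apply]
      split_ifs with h
      · subst h; rw [smul_eq_mul]
      · simp

/-- every invariant submodule containing `e₀` is everything -/
lemma V_cyclic (P : Submodule ℂ VV)
    (hP : ∀ (X : Uq q) (v : VV), v ∈ P → piV q lam mu hq hlam hqq X v ∈ P)
    (h0 : Finsupp.single (0 : ℤ) (1 : ℂ) ∈ P) : P = ⊤ := by
  have hpos : ∀ n : ℕ, Finsupp.single ((n : ℤ)) (1 : ℂ) ∈ P := by
    intro n
    induction n with
    | zero => simpa using h0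
    | succ n ih =>
        have h1 := hP (Eg q) _ ih
        rw [piV_E_single] at h1
        have h2 : alf q lam mu (n : ℤ) = 1 := if_pos (by positivity)
        rw [h2, one_smul] at h1
        have h3 : ((n : ℤ)) + 1 = ((n + 1 : ℕ) : ℤ) := by push_cast; ring
        rwa [h3] at h1
  have hneg : ∀ n : ℕ, Finsupp.single (-(n : ℤ)) (1 : ℂ) ∈ P := by
    intro n
    induction n with
    | zero => simpa using h0
    | succ n ih =>
        have h1 := hP (Fg q) _ ih
        rw [piV_F_single] at h1
        have h2 : bet q lam mu (-(n : ℤ)) = 1 := if_pos (by omega)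
        rw [h2, one_smul] at h1
        have h3 : (-(n : ℤ)) - 1 = -((n + 1 : ℕ) : ℤ) := by push_cast; ring
        rwa [h3] at h1
  have hall : ∀ k : ℤ, Finsupp.single k (1 : ℂ) ∈ P := by
    intro k
    rcases le_or_gt 0 k with hk | hk
    · have : k = ((k.toNat : ℕ) : ℤ) := by omega
      rw [this]; exact hpos _
    · have : k = -(((-k).toNat : ℕ) : ℤ) := by omega
      rw [this]; exact hneg _
  rw [eq_top_iff]
  intro v hv
  clear hv
  induction v using Finsupp.induction_linear with
  | zero => exact zero_mem P
  | add f g hf hg => exact add_mem hf hg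
  | single a b =>
      have : Finsupp.single a b = b • Finsupp.single a (1 : ℂ) := by
        rw [Finsupp.smul_single, smul_eq_mul, mul_one]
      rw [this]
      exact P.smul_mem b (hall a)

/-- transfer of equivariance to the inverse -/
lemma symm_equivariant {M N : Type} [AddCommGroup M] [Module ℂ M] [AddCommGroup N] [Module ℂ N]
    (πM : Uq q →ₐ[ℂ] Module.End ℂ M) (πN : Uq q →ₐ[ℂ] Module.End ℂ N)
    (e : M ≃ₗ[ℂ] N) (he : ∀ (X : Uq q) (m : M), e (πM X m) = πN X (e m)) :
    ∀ (X : Uq q) (n : N), e.symm (πN X n) = πM X (e.symm n) := by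
  intro X n
  apply e.injective
  rw [he, e.apply_symm_apply, e.apply_symm_apply]

/-- transfer of irreducibility along an equivariant equivalence -/
lemma irr_transfer {M N : Type} [AddCommGroup M] [Module ℂ M] [AddCommGroup N] [Module ℂ N]
    (πM : Uq q →ₐ[ℂ] Module.End ℂ M) (πN : Uq q →ₐ[ℂ] Module.End ℂ N)
    (e : M ≃ₗ[ℂ] N) (he : ∀ (X : Uq q) (m : M), e (πM X m) = πN X (e m))
    (hirr : ∀ P : Submodule ℂ M, (∀ X : Uq q, ∀ m ∈ P, πM X m ∈ P) → P = ⊥ ∨ P = ⊤) :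
    ∀ P : Submodule ℂ N, (∀ X : Uq q, ∀ n ∈ P, πN X n ∈ P) → P = ⊥ ∨ P = ⊤ := by
  intro P hP
  have hQ : ∀ X : Uq q, ∀ m ∈ Submodule.comap (e : M →ₗ[ℂ] N) P, πM X m ∈
      Submodule.comap (e : M →ₗ[ℂ] N) P := by
    intro X m hm
    simp only [Submodule.mem_comap, LinearEquiv.coe_coe] at hm ⊢
    rw [he]
    exact hP X _ hm
  have hPm : P = Submodule.map (e : M →ₗ[ℂ] N) (Submodule.comap (e : M →ₗ[ℂ] N) P) :=
    (Submodule.map_comap_eq_self (by rw [LinearEquiv.range]; exact le_top)).symm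
  rcases hirr _ hQ with h | h
  · left; rw [hPm, h, Submodule.map_bot]
  · right; rw [hPm, h, Submodule.map_top, LinearEquiv.range]

end Sl2
end
noncomputable section
namespace Sl2
variable {q lam mu : ℂ}

lemma K_mem_U0c : Kg q ∈ U0c q :=
  (Subalgebra.mem_centralizer_iff ℂ).mpr fun g hg => by rw [Set.mem_singleton_iff.mp hg]

lemma Kinv_mem_U0c : Kinvg q ∈ U0c q :=
  (Subalgebra.mem_centralizer_iff ℂ).mpr fun g hg => by
    rw [Set.mem_singleton_iff.mp hg, rel_KKinv, rel_KinvK]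

lemma EF_mem_U0c (hq : q ≠ 0) : Eg q * Fg q ∈ U0c q :=
  (Subalgebra.mem_centralizer_iff ℂ).mpr fun g hg => by
    rw [Set.mem_singleton_iff.mp hg]
    rw [← mul_assoc, rel_KE, smul_mul_assoc, mul_assoc, rel_KF, mul_smul_comm, smul_smul,
      mul_inv_cancel₀ (q2_ne q hq), one_smul, mul_assoc]

lemma phi_Kinv (φ'' : U0c q →ₐ[ℂ] ℂ) (vK : ℂ) (hK : φ'' ⟨Kg q, K_mem_U0c⟩ = vK) :
    φ'' ⟨Kinvg q, Kinv_mem_U0c⟩ = vK⁻¹ := by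
  have h1 : (⟨Kg q, K_mem_U0c⟩ : U0c q) * ⟨Kinvg q, Kinv_mem_U0c⟩ = 1 := by
    ext
    exact rel_KKinv q
  have h2 : φ'' ⟨Kg q, K_mem_U0c⟩ * φ'' ⟨Kinvg q, Kinv_mem_U0c⟩ = 1 := by
    rw [← map_mul, h1, map_one]
  rw [hK] at h2
  exact (inv_eq_of_mul_eq_one_right h2).symm

/-- the character condition for the vector `e_n` of the explicit module -/
lemma piV_char (hq : q ≠ 0) (hlam : lam ≠ 0) (hqq : q - q⁻¹ ≠ 0)
    (hroot : ∀ m : ℕ, 0 < m → q ^ m ≠ 1) (n : ℤ) (φ'' : U0c q →ₐ[ℂ] ℂ)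
    (hK : φ'' ⟨Kg q, K_mem_U0c⟩ = lam * q ^ (2 * n))
    (hEF : φ'' ⟨Eg q * Fg q, EF_mem_U0c hq⟩ = tval q lam mu n) :
    ∀ z : U0c q, piV q lam mu hq hlam hqq (z : Uq q) (Finsupp.single n 1)
      = φ'' z • Finsupp.single n 1 := by
  set en : VV := Finsupp.single n (1 : ℂ) with hen
  set T : Subalgebra ℂ (Uq q) :=
    { carrier := {x | ∃ h : x ∈ U0c q, piV q lam mu hq hlam hqq x en = φ'' ⟨x, h⟩ • en},
      mul_mem' := by
        rintro a b ⟨ha, hpa⟩ ⟨hb, hpb⟩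
        refine ⟨mul_mem ha hb, ?_⟩
        have : (⟨a * b, mul_mem ha hb⟩ : U0c q) = ⟨a, ha⟩ * ⟨b, hb⟩ := rfl
        rw [map_mul, Module.End.mul_apply, hpb, map_smul, hpa, this, map_mul, smul_smul,
          mul_comm (φ'' ⟨a, ha⟩)]
      one_mem' := ⟨one_mem _, by
        have h1 : (⟨(1 : Uq q), one_mem (U0c q)⟩ : U0c q) = 1 := rfl
        rw [map_one, Module.End.one_apply, h1, map_one, one_smul]⟩
      add_mem' := by
        rintro a b ⟨ha, hpa⟩ ⟨hb, hpb⟩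
        refine ⟨add_mem ha hb, ?_⟩
        have : (⟨a + b, add_mem ha hb⟩ : U0c q) = ⟨a, ha⟩ + ⟨b, hb⟩ := rfl
        rw [map_add, LinearMap.add_apply, hpa, hpb, this, map_add, add_smul]
      zero_mem' := ⟨zero_mem _, by
        have h1 : (⟨(0 : Uq q), zero_mem (U0c q)⟩ : U0c q) = 0 := rfl
        rw [map_zero, LinearMap.zero_apply, h1, map_zero, zero_smul]⟩
      algebraMap_mem' := by
        intro c
        refine ⟨algebraMap_mem _ c, ?_⟩
        have h1 : (⟨algebraMap ℂ (Uq q) c, algebraMap_mem _ c⟩ : U0c q)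
            = algebraMap ℂ (U0c q) c := rfl
        rw [AlgHom.commutes, h1, AlgHom.commutes]
        simp [Algebra.algebraMap_eq_smul_one] } with hT
  have hsub : A0 q ≤ T := by
    apply Algebra.adjoin_le
    intro x hx
    simp only [Set.mem_insert_iff, Set.mem_singleton_iff] at hx
    rcases hx with rfl | rfl | rfl
    · exact ⟨EF_mem_U0c hq, by rw [piV_EF_single, hEF]⟩
    · exact ⟨K_mem_U0c, by rw [piV_K_single, hK]⟩
    · refine ⟨Kinv_mem_U0c, ?_⟩
      rw [piV_Kinv_single, phi_Kinv φ'' (lam * q ^ (2 * n)) hK]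
  intro z
  obtain ⟨hz, hpz⟩ : (z : Uq q) ∈ T := hsub (U0c_le_A0 hq hroot z.2)
  have hze : (⟨(z : Uq q), hz⟩ : U0c q) = z := Subtype.ext rfl
  rw [hze] at hpz
  exact hpz

/-- universal property + irreducibility gives an equivariant equivalence onto the model -/
lemma mathieu_to_V (hq : q ≠ 0) (hlam : lam ≠ 0) (hqq : q - q⁻¹ ≠ 0)
    {M : Type} [AddCommGroup M] [Module ℂ M] {lam2 mu2 : ℂ}
    (π : Uq q →ₐ[ℂ] Module.End ℂ M) (m0 : M) (φM : U0c q →ₐ[ℂ] ℂ)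
    (hM : IsMathieuSl2 q lam2 mu2 π m0 φM)
    (hirr : ∀ P : Submodule ℂ M, (∀ X : Uq q, ∀ m ∈ P, π X m ∈ P) → P = ⊥ ∨ P = ⊤)
    (n : ℤ)
    (hchar : ∀ z : U0c q, piV q lam mu hq hlam hqq (z : Uq q) (Finsupp.single n 1)
        = φM z • Finsupp.single n 1)
    (hsurj : ∀ P : Submodule ℂ VV,
      (∀ (X : Uq q), ∀ v ∈ P, piV q lam mu hq hlam hqq X v ∈ P) →
        Finsupp.single n (1 : ℂ) ∈ P → P = ⊤) :
    ∃ e : M ≃ₗ[ℂ] VV,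
      (∀ (X : Uq q) (m : M), e (π X m) = piV q lam mu hq hlam hqq X (e m)) ∧
        e m0 = Finsupp.single n 1 := by
  obtain ⟨Ψ, ⟨hcomm, hm0⟩, -⟩ :=
    hM.2.2.2 VV (piV q lam mu hq hlam hqq) (Finsupp.single n 1) hchar
  have hone : (Finsupp.single n (1 : ℂ)) ≠ 0 := by
    intro h
    have := Finsupp.single_eq_zero.mp h
    exact one_ne_zero this
  have hinj : Function.Injective Ψ := by
    rw [← LinearMap.ker_eq_bot]
    have hker_inv : ∀ X : Uq q, ∀ m ∈ LinearMap.ker Ψ, π X m ∈ LinearMap.ker Ψ := by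
      intro X m hm
      rw [LinearMap.mem_ker] at hm ⊢
      rw [hcomm, hm, map_zero]
    rcases hirr (LinearMap.ker Ψ) hker_inv with h | h
    · exact h
    · exfalso
      apply hone
      rw [← hm0]
      have hm0k : m0 ∈ LinearMap.ker Ψ := h ▸ Submodule.mem_top
      exact hm0k
  have hsur : Function.Surjective Ψ := by
    rw [← LinearMap.range_eq_top]
    apply hsurj
    · rintro X v ⟨m, rfl⟩
      exact ⟨π X m, hcomm X m⟩
    · exact ⟨m0, hm0⟩
  refine ⟨LinearEquiv.ofBijective Ψ ⟨hinj, hsur⟩, ?_, hm0⟩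
  intro X m
  exact hcomm X m

end Sl2
end

open Sl2 in
/-- Two irreducible Mathieu modules `M(C_{λ,μ})`, `M(C_{λ',μ'})` for
`U_q(sl(2,ℂ))` are isomorphic as `U_q(sl(2,ℂ))`-modules if and only if there exists
`n ∈ ℤ` with `λ' = λq^{2n}` and
`μ' = μ − (qⁿ−q⁻ⁿ)(λq^{n-1}−λ⁻¹q^{1-n})/(q−q⁻¹)²`. -/
theorem stmt18 (q : ℂ) (hq : q ≠ 0) (hroot : ∀ m : ℕ, 0 < m → q ^ m ≠ 1)
    (lam mu lam' mu' : ℂ) (hlam : lam ≠ 0) (hlam' : lam' ≠ 0)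
    {M M' : Type} [AddCommGroup M] [Module ℂ M] [AddCommGroup M'] [Module ℂ M']
    (π : Uq q →ₐ[ℂ] Module.End ℂ M) (m0 : M) (φ : U0c q →ₐ[ℂ] ℂ)
    (hM : IsMathieuSl2 q lam mu π m0 φ)
    (π' : Uq q →ₐ[ℂ] Module.End ℂ M') (m0' : M') (φ' : U0c q →ₐ[ℂ] ℂ)
    (hM' : IsMathieuSl2 q lam' mu' π' m0' φ')
    (hirr : ∀ P : Submodule ℂ M, (∀ X : Uq q, ∀ m ∈ P, π X m ∈ P) → P = ⊥ ∨ P = ⊤)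
    (hirr' : ∀ P : Submodule ℂ M', (∀ X : Uq q, ∀ m ∈ P, π' X m ∈ P) → P = ⊥ ∨ P = ⊤) :
    (∃ e : M ≃ₗ[ℂ] M', ∀ (X : Uq q) (m : M), e (π X m) = π' X (e m)) ↔
      ∃ n : ℤ, lam' = lam * q ^ (2 * n) ∧
        mu' = mu - (q ^ n - q ^ (-n)) *
            (lam * q ^ (n - 1) - lam⁻¹ * q ^ (1 - n)) / (q - q⁻¹) ^ 2 := by
  classical
  have hqq : q - q⁻¹ ≠ 0 := Sl2.qq_ne hq hroot
  -- identify M with the model V(lam, mu)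
  have hchar0 : ∀ z : U0c q, piV q lam mu hq hlam hqq (z : Uq q) (Finsupp.single 0 1)
      = φ z • Finsupp.single 0 1 := by
    apply piV_char hq hlam hqq hroot 0 φ
    · rw [hM.1 K_mem_U0c]; simp
    · rw [hM.2.1 (EF_mem_U0c hq), tval_zero]
  obtain ⟨Ψ, hΨc, hΨ0⟩ := mathieu_to_V hq hlam hqq π m0 φ hM hirr 0 hchar0
    (fun P hP h0 => V_cyclic hq hlam hqq P hP h0)
  have hVirr := irr_transfer π (piV q lam mu hq hlam hqq) Ψ hΨc hirr
  have hsingle_ne : ∀ k : ℤ, (Finsupp.single k (1 : ℂ)) ≠ 0 := by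
    intro k h
    exact one_ne_zero (Finsupp.single_eq_zero.mp h)
  constructor
  · rintro ⟨e, he⟩
    -- identify M' with the model V(lam', mu')
    have hchar0' : ∀ z : U0c q, piV q lam' mu' hq hlam' hqq (z : Uq q) (Finsupp.single 0 1)
        = φ' z • Finsupp.single 0 1 := by
      apply piV_char hq hlam' hqq hroot 0 φ'
      · rw [hM'.1 K_mem_U0c]; simp
      · rw [hM'.2.1 (EF_mem_U0c hq), tval_zero]
    obtain ⟨Ψ', hΨ'c, hΨ'0⟩ := mathieu_to_V hq hlam' hqq π' m0' φ' hM' hirr' 0 hchar0'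
      (fun P hP h0 => V_cyclic hq hlam' hqq P hP h0)
    set G : Sl2.VV ≃ₗ[ℂ] Sl2.VV := (Ψ'.symm.trans e.symm).trans Ψ with hGdef
    have hG : ∀ (X : Uq q) (v : Sl2.VV),
        G (piV q lam' mu' hq hlam' hqq X v) = piV q lam mu hq hlam hqq X (G v) := by
      intro X v
      simp only [hGdef, LinearEquiv.trans_apply]
      rw [symm_equivariant π' (piV q lam' mu' hq hlam' hqq) Ψ' hΨ'c,
        symm_equivariant π π' e he, hΨc]
    set v : Sl2.VV := G (Finsupp.single 0 1) with hvdef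
    have hvne : v ≠ 0 := by
      intro h
      exact hsingle_ne 0 (G.map_eq_zero_iff.mp h)
    have hKv : piV q lam mu hq hlam hqq (Kg q) v = lam' • v := by
      rw [hvdef, ← hG, piV_K_single]
      simp
      rw [← map_smul, Finsupp.smul_single, smul_eq_mul, mul_one]
    have hco : ∀ k : ℤ, lam * q ^ (2 * k) * v k = lam' * v k := by
      intro k
      rw [piV_Kg] at hKv
      have h1 := DFunLike.congr_fun hKv k
      rwa [mov0_apply, Finsupp.smul_apply, smul_eq_mul] at h1
    obtain ⟨n, hvn⟩ : ∃ n, v n ≠ 0 := by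
      by_contra h
      push_neg at h
      exact hvne (Finsupp.ext h)
    have hlam'eq : lam' = lam * q ^ (2 * n) := (mul_right_cancel₀ hvn (hco n)).symm
    refine ⟨n, hlam'eq, ?_⟩
    have hk0 : ∀ k : ℤ, k ≠ n → v k = 0 := by
      intro k hk
      by_contra hvk
      have h5 : lam * q ^ (2 * k) = lam * q ^ (2 * n) :=
        mul_right_cancel₀ hvk (by rw [hco k, hlam'eq])
      have h6 : (q : ℂ) ^ (2 * k) = q ^ (2 * n) := mul_left_cancel₀ hlam h5
      have h7 : (q : ℂ) ^ (2 * k - 2 * n) = 1 := by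
        rw [zpow_sub₀ hq, h6, div_self (zpow_ne_zero _ hq)]
      have := zpow_eq_one_imp hq hroot h7
      omega
    have hveq : v = v n • Finsupp.single n 1 := by
      ext k
      rw [Finsupp.smul_apply, Finsupp.single_apply, smul_eq_mul]
      rcases eq_or_ne k n with rfl | hk
      · rw [if_pos rfl, mul_one]
      · rw [if_neg (Ne.symm hk), mul_zero, hk0 k hk]
    have hEFv : piV q lam mu hq hlam hqq (Eg q * Fg q) v = mu' • v := by
      rw [hvdef, ← hG, piV_EF_single, tval_zero, map_smul]
    rw [hveq, map_smul, piV_EF_single, smul_smul, smul_smul] at hEFv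
    have h8 : v n * tval q lam mu n = mu' * v n :=
      smul_left_injective ℂ (hsingle_ne n) hEFv
    have h9 : mu' = tval q lam mu n := by
      have h10 := mul_left_cancel₀ hvn (by rw [h8, mul_comm] : v n * tval q lam mu n = v n * mu')
      exact h10.symm
    rw [h9, Sl2.tval]
  · rintro ⟨n, h1, h2⟩
    have hchar' : ∀ z : U0c q, piV q lam mu hq hlam hqq (z : Uq q) (Finsupp.single n 1)
        = φ' z • Finsupp.single n 1 := by
      apply piV_char hq hlam hqq hroot n φ'
      · rw [hM'.1 K_mem_U0c]; exact h1
      · rw [hM'.2.1 (EF_mem_U0c hq), Sl2.tval]; exact h2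
    obtain ⟨Θ, hΘc, hΘ0⟩ := mathieu_to_V hq hlam hqq π' m0' φ' hM' hirr' n hchar'
      (fun P hP hmem => by
        rcases hVirr P hP with h | h
        · rw [h] at hmem
          exact absurd ((Submodule.mem_bot ℂ).mp hmem) (hsingle_ne n)
        · exact h)
    refine ⟨Ψ.trans Θ.symm, ?_⟩
    intro X m
    simp only [LinearEquiv.trans_apply]
    rw [hΨc, symm_equivariant π' (piV q lam mu hq hlam hqq) Θ hΘc]
end
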